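/- Let X be a selfadjoint operator on a Hilbert space H and Y ≥ 1 a selfadjoint operator such that e^{itX} leaves D(Y) invariant and ‖Y e^{itX}ψ‖ ≤ e^{k|t|}‖Yψ‖ for some k ≥ 0 and all ψ ∈ D(Y). Then for every z ∈ ℂ with |Im z| > k, the resolvent (X − z)^{-1} leaves D(Y) invariant. -/

import Mathlib

open MeasureTheory

open Filter Topology Set Metric

set_option linter.unusedVariables false

lemma aux_nested {E : Type*} [NormedAddCommGroup E] [InnerProductSpace ℂ E] [CompleteSpace E]
    (C : ℕ → Set E) (hne : ∀ n, (C n).Nonempty) (hcl : ∀ n, IsClosed (C n))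
    (hconv : ∀ n, Convex ℝ (C n)) (hanti : ∀ {m n : ℕ}, m ≤ n → C n ⊆ C m)
    (B : ℝ) (hB : ∀ n, ∀ x ∈ C n, ‖x‖ ≤ B) :
    ∃ x, ∀ n, x ∈ C n := by
  letI : InnerProductSpace ℝ E := InnerProductSpace.complexToReal
  have hmin : ∀ n : ℕ, ∃ v ∈ C n, ‖(0:E) - v‖ = ⨅ w : C n, ‖(0:E) - w‖ := fun n =>
    exists_norm_eq_iInf_of_complete_convex (hne n) (hcl n).isComplete (hconv n) 0
  choose x hx hxn using hmin
  set d : ℕ → ℝ := fun n => ⨅ w : C n, ‖(0:E) - w‖ with hd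
  have hnorm : ∀ n, ‖x n‖ = d n := by
    intro n
    show ‖x n‖ = ⨅ w : C n, ‖(0:E) - w‖
    rw [← hxn n, zero_sub, norm_neg]
  have hdle : ∀ n, ∀ w ∈ C n, d n ≤ ‖w‖ := by
    intro n w hw
    have : d n ≤ ‖(0:E) - (⟨w, hw⟩ : C n)‖ :=
      ciInf_le ⟨0, Set.forall_mem_range.2 fun _ => norm_nonneg _⟩ _
    simpa using this
  have hmono : Monotone d := by
    intro m n hmn
    calc d m ≤ ‖x n‖ := hdle m _ (hanti hmn (hx n))
      _ = d n := hnorm n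
  have hdB : ∀ n, d n ≤ B := fun n => (hnorm n) ▸ hB n _ (hx n)
  have hbdd : BddAbove (Set.range d) := ⟨B, Set.forall_mem_range.2 hdB⟩
  set L : ℝ := ⨆ n, d n with hL
  have hdL : ∀ n, d n ≤ L := fun n => le_ciSup hbdd n
  have htend : Tendsto d atTop (𝓝 L) := tendsto_atTop_ciSup hmono hbdd
  -- Cauchy estimate
  set b : ℕ → ℝ := fun N => Real.sqrt (4 * L ^ 2 - 4 * d N ^ 2) with hb
  have hcauchy : ∀ (N n m : ℕ), N ≤ n → N ≤ m → dist (x n) (x m) ≤ b N := by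
    intro N n m hn hm
    have hxnC : x n ∈ C N := hanti hn (hx n)
    have hxmC : x m ∈ C N := hanti hm (hx m)
    have hmid : (1/2 : ℝ) • x n + (1/2 : ℝ) • x m ∈ C N :=
      hconv N hxnC hxmC (by norm_num) (by norm_num) (by norm_num)
    have hmid' : d N ≤ ‖(1/2 : ℝ) • x n + (1/2 : ℝ) • x m‖ := hdle N _ hmid
    have heq : (1/2 : ℝ) • x n + (1/2 : ℝ) • x m = (1/2 : ℝ) • (x n + x m) := by
      rw [smul_add]
    have hsum : 2 * d N ≤ ‖x n + x m‖ := by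
      rw [heq, norm_smul] at hmid'
      simp only [Real.norm_eq_abs] at hmid'
      rw [abs_of_pos (by norm_num : (0:ℝ) < 1/2)] at hmid'
      linarith
    have hpar := parallelogram_law_with_norm ℝ (x n) (x m)
    have h1 : ‖x n‖ = d n := hnorm n
    have h2 : ‖x m‖ = d m := hnorm m
    have hdn : d n ≤ L := hdL n
    have hdm : d m ≤ L := hdL m
    have hdN0 : 0 ≤ d N := (hnorm N) ▸ norm_nonneg (x N)
    have hkey : ‖x n - x m‖ ^ 2 ≤ 4 * L ^ 2 - 4 * d N ^ 2 := by
      have hNn : d N ≤ d n := hmono hn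
      have hNm : d N ≤ d m := hmono hm
      nlinarith [norm_nonneg (x n + x m), norm_nonneg (x n - x m), sq_nonneg (d n - d m)]
    rw [dist_eq_norm]
    have : 0 ≤ 4 * L ^ 2 - 4 * d N ^ 2 := le_trans (sq_nonneg _) hkey
    calc ‖x n - x m‖ = Real.sqrt (‖x n - x m‖ ^ 2) := (Real.sqrt_sq (norm_nonneg _)).symm
      _ ≤ b N := Real.sqrt_le_sqrt hkey
  have hb0 : Tendsto b atTop (𝓝 0) := by
    have h1 : Tendsto (fun N => 4 * L ^ 2 - 4 * d N ^ 2) atTop (𝓝 (4 * L ^ 2 - 4 * L ^ 2)) :=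
      tendsto_const_nhds.sub ((htend.pow 2).const_mul 4)
    rw [sub_self] at h1
    have := (Real.continuous_sqrt.tendsto 0).comp h1
    simpa [hb, Real.sqrt_zero, Function.comp_def] using this
  have hCauchy : CauchySeq x := cauchySeq_of_le_tendsto_0 b (fun n m N hn hm => hcauchy N n m hn hm) hb0
  obtain ⟨y, hy⟩ := cauchySeq_tendsto_of_complete hCauchy
  refine ⟨y, fun N => ?_⟩
  refine (hcl N).mem_of_tendsto hy ?_
  filter_upwards [eventually_ge_atTop N] with n hn
  exact hanti hn (hx n)

lemma aux_closed_graph_limit {H : Type*} [NormedAddCommGroup H] [InnerProductSpace ℂ H]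
    [CompleteSpace H] (Y : H →ₗ.[ℂ] H) (hYclosed : Y.IsClosed)
    (a : ℕ → Y.domain) (x : H) (Cb : ℝ)
    (hconv : Tendsto (fun n => (a n : H)) atTop (𝓝 x))
    (hb : ∀ n, ‖Y (a n)‖ ≤ Cb) : x ∈ Y.domain := by
  set E := WithLp 2 (H × H)
  set eL : E ≃L[ℂ] H × H := WithLp.prodContinuousLinearEquiv 2 ℂ H H with heL
  set GS : Submodule ℂ E := Y.graph.comap (eL.toLinearEquiv.toLinearMap : E →ₗ[ℂ] H × H) with hGS
  have hGSmem : ∀ v : E, v ∈ GS ↔ eL v ∈ Y.graph := fun v => Iff.rfl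
  have hGScl : IsClosed (GS : Set E) := hYclosed.preimage eL.continuous
  have hGSconv : Convex ℝ (GS : Set E) := by
    have := (GS.restrictScalars ℝ).convex
    simpa using this
  set u : ℕ → E := fun n => eL.symm ((a n : H), Y (a n)) with hu
  have huG : ∀ n, u n ∈ GS := by
    intro n
    rw [hGSmem]
    simp only [hu, ContinuousLinearEquiv.apply_symm_apply]
    exact Y.mem_graph (a n)
  -- bound on ‖a n‖
  obtain ⟨A, hA⟩ : BddAbove (Set.range fun n => ‖(a n : H)‖) := hconv.norm.bddAbove_range
  have hA' : ∀ n, ‖(a n : H)‖ ≤ A := fun n => hA ⟨n, rfl⟩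
  set B : ℝ := Real.sqrt (A ^ 2 + Cb ^ 2) with hBdef
  have hub : ∀ n, ‖u n‖ ≤ B := by
    intro n
    have h2 : ‖u n‖ ^ 2 = ‖(a n : H)‖ ^ 2 + ‖Y (a n)‖ ^ 2 := by
      rw [WithLp.prod_norm_sq_eq_of_L2]
      congr 1
    have hA0 : 0 ≤ ‖(a n : H)‖ := norm_nonneg _
    have : ‖u n‖ ^ 2 ≤ A ^ 2 + Cb ^ 2 := by
      rw [h2]
      have := hA' n; have := hb n
      nlinarith [norm_nonneg (Y (a n))]
    calc ‖u n‖ = Real.sqrt (‖u n‖ ^ 2) := (Real.sqrt_sq (norm_nonneg _)).symm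
      _ ≤ B := Real.sqrt_le_sqrt this
  set CC : ℕ → Set E := fun n => closure (convexHull ℝ (u '' Set.Ici n)) with hCC
  have key : ∃ w, ∀ n, w ∈ CC n := by
    apply aux_nested CC
    · exact fun n => ⟨u n, subset_closure (subset_convexHull ℝ _ ⟨n, self_mem_Ici, rfl⟩)⟩
    · exact fun n => isClosed_closure
    · exact fun n => (convex_convexHull ℝ _).closure
    · intro m n hmn
      exact closure_mono (convexHull_mono (Set.image_mono (Set.Ici_subset_Ici.2 hmn)))
    · intro n y hy
      have hsub : u '' Set.Ici n ⊆ closedBall (0:E) B := by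
        rintro _ ⟨m, _, rfl⟩
        simpa [mem_closedBall, dist_zero_right] using hub m
      have : CC n ⊆ closedBall (0:E) B :=
        closure_minimal (convexHull_min hsub (convex_closedBall _ _)) Metric.isClosed_closedBall
      simpa [mem_closedBall, dist_zero_right] using this hy
  obtain ⟨w, hw⟩ := key
  -- w is in the graph
  have hwG : w ∈ GS := by
    have : CC 0 ⊆ (GS : Set E) :=
      closure_minimal (convexHull_min (by rintro _ ⟨m, _, rfl⟩; exact huG m) hGSconv) hGScl
    exact this (hw 0)
  -- first coordinate of w is x
  set CL : E →L[ℂ] H := (ContinuousLinearMap.fst ℂ H H).comp (eL : E →L[ℂ] H × H) with hCL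
  have hCLu : ∀ n, CL (u n) = (a n : H) := by
    intro n
    simp [hCL, hu]
  have hfst : CL w = x := by
    apply eq_of_forall_dist_le
    intro ε hε
    obtain ⟨N, hN⟩ := Metric.tendsto_atTop.1 hconv ε hε
    set K : Set E := CL ⁻¹' closedBall x ε with hK
    have hKcl : IsClosed K := Metric.isClosed_closedBall.preimage CL.continuous
    have hKconv : Convex ℝ K := by
      have := (convex_closedBall x ε).linear_preimage ((CL.toLinearMap).restrictScalars ℝ)
      exact this
    have hsub : u '' Set.Ici N ⊆ K := by
      rintro _ ⟨m, hm, rfl⟩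
      simp only [hK, Set.mem_preimage, mem_closedBall, hCLu m]
      exact (hN m hm).le
    have : CC N ⊆ K := closure_minimal (convexHull_min hsub hKconv) hKcl
    exact this (hw N)
  rw [hGSmem] at hwG
  rw [LinearPMap.mem_graph_iff] at hwG
  obtain ⟨y, hy1, hy2⟩ := hwG
  have : (eL w).1 = x := hfst
  rw [← this, ← hy1]
  exact y.2

lemma aux_piece_disjoint (n : ℕ) (t : ℝ) (i j : ℕ) (hij : j ≠ i)
    (hi : t ∈ Set.Ioc ((i:ℝ)/((n:ℝ)+1)) (((i:ℝ)+1)/((n:ℝ)+1))) :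
    t ∉ Set.Ioc ((j:ℝ)/((n:ℝ)+1)) (((j:ℝ)+1)/((n:ℝ)+1)) := by
  intro hj
  have hpos : (0:ℝ) < (n:ℝ)+1 := by positivity
  obtain ⟨hi1, hi2⟩ := hi
  obtain ⟨hj1, hj2⟩ := hj
  rw [div_lt_iff₀ hpos] at hi1 hj1
  rw [le_div_iff₀ hpos] at hi2 hj2
  rcases lt_or_gt_of_ne hij with h | h
  · have : (j:ℝ) + 1 ≤ (i:ℝ) := by exact_mod_cast Nat.succ_le_of_lt h
    nlinarith
  · have : (i:ℝ) + 1 ≤ (j:ℝ) := by exact_mod_cast Nat.succ_le_of_lt h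
    nlinarith

set_option maxHeartbeats 1000000 in
lemma aux_integral_mem {H : Type*} [NormedAddCommGroup H] [InnerProductSpace ℂ H] [CompleteSpace H]
    (Y : H →ₗ.[ℂ] H) (hYclosed : Y.IsClosed)
    (f : ℝ → H) (hf : Continuous f) (hdom : ∀ t, f t ∈ Y.domain)
    (α M M' : ℝ) (hα : 0 < α)
    (hM : ∀ t : ℝ, 0 ≤ t → ‖f t‖ ≤ M * Real.exp (-α * t))
    (hM' : ∀ t : ℝ, 0 ≤ t → ‖Y ⟨f t, hdom t⟩‖ ≤ M' * Real.exp (-α * t)) :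
    (∫ t in Set.Ioi (0:ℝ), f t) ∈ Y.domain := by
  have hM0 : 0 ≤ M := by
    have := hM 0 le_rfl
    simpa [Real.exp_zero] using (norm_nonneg (f 0)).trans this
  have hM'0 : 0 ≤ M' := by
    have := hM' 0 le_rfl
    simpa [Real.exp_zero] using (norm_nonneg _).trans this
  -- the discretized approximants
  set g : ℕ → ℝ → H := fun n t => ∑ i ∈ Finset.range ((n+1)^2),
      (Set.Ioc ((i:ℝ)/((n:ℝ)+1)) (((i:ℝ)+1)/((n:ℝ)+1))).indicator
        (fun _ => f ((i:ℝ)/((n:ℝ)+1))) t with hg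
  have heval : ∀ (n i : ℕ) (t : ℝ), i < (n+1)^2 →
      t ∈ Set.Ioc ((i:ℝ)/((n:ℝ)+1)) (((i:ℝ)+1)/((n:ℝ)+1)) →
      g n t = f ((i:ℝ)/((n:ℝ)+1)) := by
    intro n i t hi ht
    simp only [hg]
    rw [Finset.sum_eq_single_of_mem i (Finset.mem_range.2 hi)]
    · exact Set.indicator_of_mem ht _
    · intro j _ hji
      exact Set.indicator_of_notMem (aux_piece_disjoint n t i j hji ht) _
  have hzero : ∀ (n : ℕ) (t : ℝ),
      (∀ i : ℕ, i < (n+1)^2 → t ∉ Set.Ioc ((i:ℝ)/((n:ℝ)+1)) (((i:ℝ)+1)/((n:ℝ)+1))) →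
      g n t = 0 := by
    intro n t h
    simp only [hg]
    exact Finset.sum_eq_zero fun i hi =>
      Set.indicator_of_notMem (h i (Finset.mem_range.1 hi)) _
  -- pointwise convergence
  have hpt : ∀ t : ℝ, t ∈ Set.Ioi (0:ℝ) → Tendsto (fun n => g n t) atTop (𝓝 (f t)) := by
    intro t ht
    have ht0 : 0 < t := ht
    set c : ℕ → ℝ := fun n => ((⌈t * ((n:ℝ)+1)⌉ - 1 : ℤ) : ℝ)/((n:ℝ)+1) with hc
    have hpos : ∀ n : ℕ, (0:ℝ) < (n:ℝ)+1 := fun n => by positivity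
    have hc1 : ∀ n, c n < t := by
      intro n
      rw [hc, div_lt_iff₀ (hpos n)]
      push_cast
      have := Int.ceil_lt_add_one (t * ((n:ℝ)+1))
      linarith
    have hc2 : ∀ n : ℕ, t - 1/((n:ℝ)+1) ≤ c n := by
      intro n
      rw [hc]
      rw [le_div_iff₀ (hpos n)]
      have h := Int.le_ceil (t * ((n:ℝ)+1))
      have hmc : (1/((n:ℝ)+1)) * ((n:ℝ)+1) = 1 := by field_simp
      rw [sub_mul, hmc]
      push_cast
      linarith
    have hct : Tendsto c atTop (𝓝 t) := by
      have hlow : Tendsto (fun n : ℕ => t - 1/((n:ℝ)+1)) atTop (𝓝 (t - 0)) :=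
        tendsto_const_nhds.sub tendsto_one_div_add_atTop_nhds_zero_nat
      rw [sub_zero] at hlow
      exact tendsto_of_tendsto_of_tendsto_of_le_of_le hlow tendsto_const_nhds
        (fun n => hc2 n) (fun n => (hc1 n).le)
    have heq : ∀ᶠ n in atTop, f (c n) = g n t := by
      filter_upwards [eventually_ge_atTop ⌈t⌉₊] with n hn
      have htn : t ≤ (n:ℝ)+1 := by
        have h1 : t ≤ (⌈t⌉₊ : ℝ) := Nat.le_ceil t
        have h2 : ((⌈t⌉₊ : ℕ) : ℝ) ≤ (n:ℝ) := by exact_mod_cast hn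
        linarith
      set m : ℤ := ⌈t * ((n:ℝ)+1)⌉ with hm
      have hm1 : 1 ≤ m := Int.ceil_pos.2 (by positivity)
      have hmN : m ≤ ((n+1)^2 : ℕ) := by
        rw [hm]
        apply Int.ceil_le.2
        push_cast
        nlinarith [hpos n]
      set i : ℕ := (m - 1).toNat with hi
      have hicast : (i:ℝ) = (m:ℝ) - 1 := by
        have h1 : ((i:ℤ) : ℝ) = ((m - 1 : ℤ) : ℝ) := by
          rw [hi, Int.toNat_of_nonneg (by omega : (0:ℤ) ≤ m - 1)]
        push_cast at h1
        linarith
      have hiN : i < (n+1)^2 := by omega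
      have htm : t ∈ Set.Ioc ((i:ℝ)/((n:ℝ)+1)) (((i:ℝ)+1)/((n:ℝ)+1)) := by
        constructor
        · rw [div_lt_iff₀ (hpos n), hicast]
          have := Int.ceil_lt_add_one (t * ((n:ℝ)+1))
          rw [← hm] at this
          linarith
        · rw [le_div_iff₀ (hpos n), hicast]
          have := Int.le_ceil (t * ((n:ℝ)+1))
          rw [← hm] at this
          linarith
      rw [heval n i t hiN htm, hc]
      congr 1
      rw [hicast]
      push_cast
      ring
    exact ((hf.tendsto t).comp hct).congr' heq
  -- uniform bound
  have hgb : ∀ (n : ℕ) (t : ℝ), t ∈ Set.Ioi (0:ℝ) →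
      ‖g n t‖ ≤ (M * Real.exp α) * Real.exp (-α * t) := by
    intro n t ht
    by_cases hcase : ∃ i : ℕ, i < (n+1)^2 ∧
        t ∈ Set.Ioc ((i:ℝ)/((n:ℝ)+1)) (((i:ℝ)+1)/((n:ℝ)+1))
    · obtain ⟨i, hi, hti⟩ := hcase
      rw [heval n i t hi hti]
      have hpos : (0:ℝ) < (n:ℝ)+1 := by positivity
      have hge : t - 1 ≤ (i:ℝ)/((n:ℝ)+1) := by
        have h2 := hti.2
        rw [le_div_iff₀ hpos] at h2
        rw [le_div_iff₀ hpos]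
        nlinarith [Nat.cast_nonneg (α := ℝ) n]
      calc ‖f ((i:ℝ)/((n:ℝ)+1))‖ ≤ M * Real.exp (-α * ((i:ℝ)/((n:ℝ)+1))) :=
            hM _ (by positivity)
        _ ≤ M * Real.exp (-α * (t - 1)) := by
            apply mul_le_mul_of_nonneg_left _ hM0
            apply Real.exp_le_exp.2
            nlinarith
        _ = (M * Real.exp α) * Real.exp (-α * t) := by
            rw [mul_assoc, ← Real.exp_add]
            ring_nf
    · push_neg at hcase
      rw [hzero n t fun i hi => hcase i hi]
      have : (0:ℝ) ≤ (M * Real.exp α) * Real.exp (-α * t) := by positivity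
      simpa using this
  -- measurability
  have hgm : ∀ n, AEStronglyMeasurable (g n) (volume.restrict (Set.Ioi (0:ℝ))) := by
    intro n
    apply StronglyMeasurable.aestronglyMeasurable
    apply Finset.stronglyMeasurable_fun_sum
    intro i _
    exact stronglyMeasurable_const.indicator measurableSet_Ioc
  -- integrable bound
  have hbi : Integrable (fun t => (M * Real.exp α) * Real.exp (-α * t))
      (volume.restrict (Set.Ioi (0:ℝ))) :=
    (exp_neg_integrableOn_Ioi 0 hα).const_mul _
  -- dominated convergence
  have hlim : Tendsto (fun n => ∫ t in Set.Ioi (0:ℝ), g n t) atTop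
      (𝓝 (∫ t in Set.Ioi (0:ℝ), f t)) := by
    apply tendsto_integral_of_dominated_convergence _ hgm hbi
    · intro n
      filter_upwards [ae_restrict_mem measurableSet_Ioi] with t ht
      exact hgb n t ht
    · filter_upwards [ae_restrict_mem measurableSet_Ioi] with t ht
      exact hpt t ht
  -- compute the integrals of the approximants
  have hsmulR : ∀ (r : ℝ) (v : H), (r : ℂ) • v = r • v := fun r v => Complex.coe_smul r v
  have hint : ∀ n : ℕ, ∫ t in Set.Ioi (0:ℝ), g n t = ∑ i ∈ Finset.range ((n+1)^2),
      (((n:ℝ)+1)⁻¹) • f ((i:ℝ)/((n:ℝ)+1)) := by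
    intro n
    have hpos : (0:ℝ) < (n:ℝ)+1 := by positivity
    have hIoc : ∀ i : ℕ, Set.Ioc ((i:ℝ)/((n:ℝ)+1)) (((i:ℝ)+1)/((n:ℝ)+1)) ⊆ Set.Ioi (0:ℝ) := by
      intro i t ht
      have : (0:ℝ) ≤ (i:ℝ)/((n:ℝ)+1) := by positivity
      exact lt_of_le_of_lt this ht.1
    have hinteg : ∀ i : ℕ, Integrable
        ((Set.Ioc ((i:ℝ)/((n:ℝ)+1)) (((i:ℝ)+1)/((n:ℝ)+1))).indicator
          (fun _ => f ((i:ℝ)/((n:ℝ)+1)))) (volume.restrict (Set.Ioi (0:ℝ))) := by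
      intro i
      rw [integrable_indicator_iff measurableSet_Ioc]
      apply integrableOn_const
      exact ne_of_lt <| lt_of_le_of_lt (Measure.restrict_apply_le _ _) measure_Ioc_lt_top
      exact enorm_ne_top
    calc ∫ t in Set.Ioi (0:ℝ), g n t
        = ∑ i ∈ Finset.range ((n+1)^2), ∫ t in Set.Ioi (0:ℝ),
            (Set.Ioc ((i:ℝ)/((n:ℝ)+1)) (((i:ℝ)+1)/((n:ℝ)+1))).indicator
              (fun _ => f ((i:ℝ)/((n:ℝ)+1))) t := by
          simp only [hg]
          exact integral_finset_sum _ (fun i _ => hinteg i)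
      _ = ∑ i ∈ Finset.range ((n+1)^2), (((n:ℝ)+1)⁻¹) • f ((i:ℝ)/((n:ℝ)+1)) := by
          apply Finset.sum_congr rfl
          intro i _
          rw [integral_indicator_const _ measurableSet_Ioc]
          congr 1
          rw [measureReal_def, Measure.restrict_apply measurableSet_Ioc,
            Set.inter_eq_self_of_subset_left (hIoc i), Real.volume_Ioc]
          have harith : ((i:ℝ)+1)/((n:ℝ)+1) - (i:ℝ)/((n:ℝ)+1) = ((n:ℝ)+1)⁻¹ := by
            field_simp
            ring
          rw [harith, ENNReal.toReal_ofReal (by positivity)]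
  -- the approximants as elements of the domain
  set σ : ℕ → Y.domain := fun n => ∑ i ∈ Finset.range ((n+1)^2),
      ((((n:ℝ)+1)⁻¹ : ℝ) : ℂ) • (⟨f ((i:ℝ)/((n:ℝ)+1)), hdom _⟩ : Y.domain) with hσ
  have hσcoe : ∀ n, (σ n : H) = ∫ t in Set.Ioi (0:ℝ), g n t := by
    intro n
    rw [hint n]
    simp only [hσ, AddSubmonoidClass.coe_finset_sum, SetLike.val_smul]
    exact Finset.sum_congr rfl fun i _ => hsmulR _ _
  -- bound on Y of the approximants
  have hYσ : ∀ n, ‖Y (σ n)‖ ≤ M' * (Real.exp α / α) := by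
    intro n
    have hpos : (0:ℝ) < (n:ℝ)+1 := by positivity
    set x : ℝ := α / ((n:ℝ)+1) with hx
    have hx0 : 0 < x := by positivity
    set r : ℝ := Real.exp (-x) with hr
    have hr0 : 0 ≤ r := (Real.exp_pos _).le
    have hr1 : r < 1 := by
      rw [hr, ← Real.exp_zero]
      exact Real.exp_lt_exp.2 (by linarith)
    have hmap : Y (σ n) = ∑ i ∈ Finset.range ((n+1)^2),
        ((((n:ℝ)+1)⁻¹ : ℝ) : ℂ) • Y (⟨f ((i:ℝ)/((n:ℝ)+1)), hdom _⟩ : Y.domain) := by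
      simp only [hσ]
      show Y.toFun _ = _
      rw [map_sum]
      simp only [_root_.map_smul]
      rfl
    rw [hmap]
    have hterm : ∀ i ∈ Finset.range ((n+1)^2),
        ‖((((n:ℝ)+1)⁻¹ : ℝ) : ℂ) • Y (⟨f ((i:ℝ)/((n:ℝ)+1)), hdom _⟩ : Y.domain)‖
          ≤ (((n:ℝ)+1)⁻¹ * M') * r ^ i := by
      intro i _
      rw [norm_smul, Complex.norm_real, Real.norm_eq_abs, abs_of_pos (by positivity)]
      have h1 := hM' ((i:ℝ)/((n:ℝ)+1)) (by positivity)
      have h2 : Real.exp (-α * ((i:ℝ)/((n:ℝ)+1))) = r ^ i := by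
        rw [hr, ← Real.exp_nat_mul]
        congr 1
        rw [hx]
        ring
      calc (((n:ℝ)+1)⁻¹) * ‖Y (⟨f ((i:ℝ)/((n:ℝ)+1)), hdom _⟩ : Y.domain)‖
          ≤ (((n:ℝ)+1)⁻¹) * (M' * Real.exp (-α * ((i:ℝ)/((n:ℝ)+1)))) :=
            mul_le_mul_of_nonneg_left h1 (by positivity)
        _ = (((n:ℝ)+1)⁻¹ * M') * r ^ i := by rw [h2]; ring
    calc ‖∑ i ∈ Finset.range ((n+1)^2),
          ((((n:ℝ)+1)⁻¹ : ℝ) : ℂ) • Y (⟨f ((i:ℝ)/((n:ℝ)+1)), hdom _⟩ : Y.domain)‖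
        ≤ ∑ i ∈ Finset.range ((n+1)^2), (((n:ℝ)+1)⁻¹ * M') * r ^ i :=
          norm_sum_le_of_le _ hterm
      _ = (((n:ℝ)+1)⁻¹ * M') * ∑ i ∈ Finset.range ((n+1)^2), r ^ i := by
          rw [Finset.mul_sum]
      _ ≤ (((n:ℝ)+1)⁻¹ * M') * (1 - r)⁻¹ := by
          apply mul_le_mul_of_nonneg_left _ (by positivity)
          have hsummable : Summable (fun i : ℕ => r ^ i) := summable_geometric_of_lt_one hr0 hr1
          calc ∑ i ∈ Finset.range ((n+1)^2), r ^ i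
              ≤ ∑' i : ℕ, r ^ i := hsummable.sum_le_tsum _ (fun i _ => by positivity)
            _ = (1 - r)⁻¹ := tsum_geometric_of_lt_one hr0 hr1
      _ ≤ M' * (Real.exp α / α) := by
          have hkey : x * Real.exp (-x) ≤ 1 - Real.exp (-x) := by
            have h1 := Real.add_one_le_exp x
            have h2 := Real.exp_pos x
            have h3 : Real.exp (-x) = (Real.exp x)⁻¹ := Real.exp_neg x
            have h4 : Real.exp x * (Real.exp x)⁻¹ = 1 := mul_inv_cancel₀ (ne_of_gt h2)
            have h5 : (0:ℝ) < (Real.exp x)⁻¹ := inv_pos.2 h2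
            rw [h3]
            nlinarith
          have h1r : 0 < 1 - r := by linarith
          have hxr : 0 < x * Real.exp (-x) := by positivity
          have hinv : (1 - r)⁻¹ ≤ (x * Real.exp (-x))⁻¹ := by
            apply inv_anti₀ hxr
            rw [hr]
            exact hkey
          have hinv2 : (x * Real.exp (-x))⁻¹ = x⁻¹ * Real.exp x := by
            rw [mul_inv, Real.exp_neg, inv_inv]
          have hn1 : (((n:ℝ)+1)⁻¹ : ℝ) = x / α := by
            rw [hx]
            field_simp
          rw [hn1]
          calc x / α * M' * (1 - r)⁻¹ ≤ x / α * M' * (x⁻¹ * Real.exp x) := by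
                apply mul_le_mul_of_nonneg_left _ (by positivity)
                rw [← hinv2]; exact hinv
            _ = M' * (Real.exp x / α) := by
                field_simp
            _ ≤ M' * (Real.exp α / α) := by
                have hxα : x ≤ α := by
                  rw [hx, div_le_iff₀ hpos]
                  nlinarith [Nat.cast_nonneg (α := ℝ) n]
                gcongr
  have hconv' : Tendsto (fun n => (σ n : H)) atTop (𝓝 (∫ t in Set.Ioi (0:ℝ), f t)) := by
    simpa only [hσcoe] using hlim
  exact aux_closed_graph_limit Y hYclosed σ _ _ hconv' hYσ

/-- **Invariance of `D(Y)` under resolvents of `X`** (Proposition 5.6 of Fröhlich–Merkli).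
Let `Y ≥ 1` be selfadjoint (closed), and let `U t = e^{itX}` be the unitary group of a
selfadjoint operator `X` leaving `D(Y)` invariant with `‖Y U t ψ‖ ≤ e^{k|t|}‖Yψ‖`.  The
resolvent `Res z = (X − z)^{-1}`, which for `|Im z| > k` has the Laplace-transform
representations `Res z = i∫₀^∞ e^{-izt} U t dt` (`Im z < -k`) and
`Res z = -i∫₀^∞ e^{izt} U (−t) dt` (`Im z > k`), leaves `D(Y)` invariant for all such `z`. -/
theorem resolvent_leaves_domain_invariant
    {H : Type*} [NormedAddCommGroup H] [InnerProductSpace ℂ H] [CompleteSpace H]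
    (Y : H →ₗ.[ℂ] H) (hYclosed : Y.IsClosed)
    (hY1 : ∀ ψ : Y.domain, ‖(ψ : H)‖ ^ 2 ≤ (inner (𝕜 := ℂ) (ψ : H) (Y ψ)).re)
    (U : ℝ → (H →L[ℂ] H))
    (hU0 : U 0 = 1) (hUgroup : ∀ s t, U (s + t) = (U s).comp (U t))
    (hUiso : ∀ t (ψ : H), ‖U t ψ‖ = ‖ψ‖)
    (hUcont : ∀ ψ : H, Continuous fun t => U t ψ)
    (k : ℝ) (hk : 0 ≤ k)
    (hinv : ∀ (t : ℝ) (ψ : Y.domain), U t (ψ : H) ∈ Y.domain)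
    (hbound : ∀ (t : ℝ) (ψ : Y.domain),
      ‖Y ⟨U t (ψ : H), hinv t ψ⟩‖ ≤ Real.exp (k * |t|) * ‖Y ψ‖)
    -- the resolvent family of the generator `X` of `U`:
    (Res : ℂ → (H →L[ℂ] H))
    (hResLow : ∀ z : ℂ, z.im < -k → ∀ ψ : H,
      Res z ψ = Complex.I • ∫ t in Set.Ioi (0:ℝ),
        Complex.exp (-(Complex.I * z * t)) • U t ψ)
    (hResHigh : ∀ z : ℂ, (k : ℝ) < z.im → ∀ ψ : H,
      Res z ψ = (-Complex.I) • ∫ t in Set.Ioi (0:ℝ),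
        Complex.exp (Complex.I * z * t) • U (-t) ψ) :
    ∀ z : ℂ, k < |z.im| → ∀ ψ : H, ψ ∈ Y.domain → Res z ψ ∈ Y.domain := by
  intro z hz ψ hψ
  set ψd : Y.domain := ⟨ψ, hψ⟩ with hψd
  by_cases hsign : 0 ≤ z.im
  · -- high case : k < z.im
    have hzim : k < z.im := by rwa [abs_of_nonneg hsign] at hz
    rw [hResHigh z hzim ψ]
    apply Y.domain.smul_mem
    set α : ℝ := z.im - k with hαdef
    have hα0 : 0 < α := by simp only [hαdef]; linarith
    set f : ℝ → H := fun t => Complex.exp (Complex.I * z * t) • U (-t) ψ with hfdef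
    have hcont : Continuous f := by
      apply Continuous.smul
      · exact Complex.continuous_exp.comp
          ((continuous_const.mul Complex.continuous_ofReal))
      · exact (hUcont ψ).comp continuous_neg
    have hdomf : ∀ t, f t ∈ Y.domain := fun t => Y.domain.smul_mem _ (hinv (-t) ψd)
    have hnormc : ∀ t : ℝ, ‖Complex.exp (Complex.I * z * t)‖ = Real.exp (-z.im * t) := by
      intro t
      rw [Complex.norm_exp]
      congr 1
      simp [Complex.mul_re, Complex.mul_im]
    apply aux_integral_mem Y hYclosed f hcont hdomf α ‖ψ‖ ‖Y ψd‖ hα0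
    · intro t ht
      rw [hfdef]
      simp only []
      rw [norm_smul, hnormc, hUiso]
      rw [mul_comm]
      apply mul_le_mul_of_nonneg_left _ (norm_nonneg ψ)
      apply Real.exp_le_exp.2
      nlinarith
    · intro t ht
      have hel : (⟨f t, hdomf t⟩ : Y.domain)
          = Complex.exp (Complex.I * z * t) • (⟨U (-t) ψ, hinv (-t) ψd⟩ : Y.domain) :=
        Subtype.ext rfl
      rw [hel]
      show ‖Y.toFun _‖ ≤ _
      rw [_root_.map_smul, norm_smul, hnormc]
      have hb := hbound (-t) ψd
      calc Real.exp (-z.im * t) * ‖Y.toFun ⟨U (-t) ψ, hinv (-t) ψd⟩‖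
          ≤ Real.exp (-z.im * t) * (Real.exp (k * |(-t)|) * ‖Y ψd‖) :=
            mul_le_mul_of_nonneg_left hb (Real.exp_nonneg _)
        _ = Real.exp (-z.im * t) * (Real.exp (k * t) * ‖Y ψd‖) := by
            rw [abs_neg, abs_of_nonneg ht]
        _ = ‖Y ψd‖ * (Real.exp (-z.im * t) * Real.exp (k * t)) := by ring
        _ = ‖Y ψd‖ * Real.exp (-α * t) := by
            rw [← Real.exp_add]
            congr 2
            rw [hαdef]; ring
  · -- low case : z.im < -k
    push_neg at hsign
    have hzim : z.im < -k := by
      rw [abs_of_neg hsign] at hz; linarith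
    rw [hResLow z hzim ψ]
    apply Y.domain.smul_mem
    set α : ℝ := -(z.im + k) with hαdef
    have hα0 : 0 < α := by simp only [hαdef]; linarith
    set f : ℝ → H := fun t => Complex.exp (-(Complex.I * z * t)) • U t ψ with hfdef
    have hcont : Continuous f := by
      apply Continuous.smul
      · exact Complex.continuous_exp.comp
          ((continuous_const.mul Complex.continuous_ofReal)).neg
      · exact hUcont ψ
    have hdomf : ∀ t, f t ∈ Y.domain := fun t => Y.domain.smul_mem _ (hinv t ψd)
    have hnormc : ∀ t : ℝ, ‖Complex.exp (-(Complex.I * z * t))‖ = Real.exp (z.im * t) := by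
      intro t
      rw [Complex.norm_exp]
      congr 1
      simp [Complex.mul_re, Complex.mul_im]
    apply aux_integral_mem Y hYclosed f hcont hdomf α ‖ψ‖ ‖Y ψd‖ hα0
    · intro t ht
      rw [hfdef]
      simp only []
      rw [norm_smul, hnormc, hUiso]
      rw [mul_comm]
      apply mul_le_mul_of_nonneg_left _ (norm_nonneg ψ)
      apply Real.exp_le_exp.2
      nlinarith
    · intro t ht
      have hel : (⟨f t, hdomf t⟩ : Y.domain)
          = Complex.exp (-(Complex.I * z * t)) • (⟨U t ψ, hinv t ψd⟩ : Y.domain) :=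
        Subtype.ext rfl
      rw [hel]
      show ‖Y.toFun _‖ ≤ _
      rw [_root_.map_smul, norm_smul, hnormc]
      have hb := hbound t ψd
      calc Real.exp (z.im * t) * ‖Y.toFun ⟨U t ψ, hinv t ψd⟩‖
          ≤ Real.exp (z.im * t) * (Real.exp (k * |t|) * ‖Y ψd‖) :=
            mul_le_mul_of_nonneg_left hb (Real.exp_nonneg _)
        _ = Real.exp (z.im * t) * (Real.exp (k * t) * ‖Y ψd‖) := by
            rw [abs_of_nonneg ht]
        _ = ‖Y ψd‖ * (Real.exp (z.im * t) * Real.exp (k * t)) := by ring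
        _ = ‖Y ψd‖ * Real.exp (-α * t) := by
            rw [← Real.exp_add]
            congr 2
            rw [hαdef]; ring
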